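/- For y ∈ (0,1), the integral of log x against the Marčenko–Pastur density with ratio y equals ((y−1)/y)·log(1−y) − 1: ∫_{a₋}^{a₊} log(x) p_y(x) dx = (y−1)/y · log(1−y) − 1. -/

import Mathlib

open Real intervalIntegral MeasureTheory Set Filter Topology

open Real intervalIntegral MeasureTheory Set Filter Topology

noncomputable def Kint (r : ℝ) : ℝ := ∫ θ in (0:ℝ)..π, Real.log (1 + r^2 - 2*r*Real.cos θ)

lemma w_pos {r : ℝ} (hr0 : -1 < r) (hr1 : r < 1) (θ : ℝ) :
    0 < 1 + r^2 - 2*r*Real.cos θ := by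
  have h2 : |r| < 1 := abs_lt.mpr ⟨hr0, hr1⟩
  have h3 : 2*r*Real.cos θ ≤ 2*|r| := by
    calc 2*r*Real.cos θ ≤ |2*r*Real.cos θ| := le_abs_self _
    _ = 2 * |r| * |Real.cos θ| := by rw [abs_mul, abs_mul]; norm_num
    _ ≤ 2 * |r| := by nlinarith [abs_nonneg r, Real.abs_cos_le_one θ]
  nlinarith [sq_abs r, mul_pos (sub_pos.2 h2) (sub_pos.2 h2), abs_mul_abs_self r, sq_nonneg (1 - |r|)]

lemma logw_cont {r : ℝ} (hr0 : -1 < r) (hr1 : r < 1) :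
    Continuous (fun θ : ℝ => Real.log (1 + r^2 - 2*r*Real.cos θ)) := by
  apply Continuous.log (by continuity)
  exact fun θ => (w_pos hr0 hr1 θ).ne'

lemma Kneg {r : ℝ} : (∫ θ in (0:ℝ)..π, Real.log (1 + r^2 + 2*r*Real.cos θ)) = Kint r := by
  calc (∫ θ in (0:ℝ)..π, Real.log (1 + r^2 + 2*r*Real.cos θ))
      = ∫ θ in (0:ℝ)..π, (fun x => Real.log (1 + r^2 - 2*r*Real.cos x)) (π - θ) := by
        apply integral_congr; intro θ _; simp [Real.cos_pi_sub]
    _ = Kint r := by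
        rw [intervalIntegral.integral_comp_sub_left (fun x => Real.log (1 + r^2 - 2*r*Real.cos x)) π]
        norm_num [Kint]


lemma Kintegrable {r : ℝ} (hr0 : -1 < r) (hr1 : r < 1) (a b : ℝ) :
    IntervalIntegrable (fun θ : ℝ => Real.log (1 + r^2 - 2*r*Real.cos θ)) volume a b :=
  (logw_cont hr0 hr1).intervalIntegrable a b


lemma Kdouble {r : ℝ} (hr0 : 0 ≤ r) (hr1 : r < 1) : Kint (r^2) = 2 * Kint r := by
  have hr0' : -1 < r := by linarith
  have hs0 : -1 < r^2 := by nlinarith [sq_nonneg r]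
  have hs1 : r^2 < 1 := by nlinarith
  have hplus : ∀ θ : ℝ, 0 < 1 + r^2 + 2*r*Real.cos θ := fun θ => by
    have := w_pos hr0' hr1 (π - θ); rw [Real.cos_pi_sub] at this; nlinarith
  have key : 2 * Kint r
      = ∫ θ in (0:ℝ)..π, Real.log (1 + (r^2)^2 - 2*r^2*Real.cos (2*θ)) := by
    have h1 : Kint r + (∫ θ in (0:ℝ)..π, Real.log (1 + r^2 + 2*r*Real.cos θ)) = 2 * Kint r := by
      rw [Kneg]; ring
    rw [← h1, Kint, ← intervalIntegral.integral_add (Kintegrable hr0' hr1 0 π)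
      (by
        apply Continuous.intervalIntegrable
        exact Continuous.log (by continuity) (fun θ => (hplus θ).ne'))]
    apply integral_congr; intro θ _
    show Real.log _ + Real.log _ = Real.log _
    rw [← Real.log_mul (w_pos hr0' hr1 θ).ne' (hplus θ).ne']
    congr 1
    have : Real.cos (2*θ) = 2 * Real.cos θ ^2 - 1 := Real.cos_two_mul θ
    nlinarith [this]
  have h2 : (∫ θ in (0:ℝ)..π, Real.log (1 + (r^2)^2 - 2*r^2*Real.cos (2*θ)))
      = (1/2) * ∫ u in (0:ℝ)..(2*π), Real.log (1 + (r^2)^2 - 2*r^2*Real.cos u) := by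
    have := intervalIntegral.integral_comp_mul_left
      (fun u => Real.log (1 + (r^2)^2 - 2*r^2*Real.cos u)) (a := 0) (b := π) (two_ne_zero)
    rw [this]; norm_num
  have h3 : (∫ u in (0:ℝ)..(2*π), Real.log (1 + (r^2)^2 - 2*r^2*Real.cos u))
      = Kint (r^2) + ∫ u in π..(2*π), Real.log (1 + (r^2)^2 - 2*r^2*Real.cos u) := by
    rw [Kint, intervalIntegral.integral_add_adjacent_intervals (Kintegrable hs0 hs1 0 π)
      (Kintegrable hs0 hs1 π (2*π))]
  have h4 : (∫ u in π..(2*π), Real.log (1 + (r^2)^2 - 2*r^2*Real.cos u)) = Kint (r^2) := by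
    have := intervalIntegral.integral_comp_add_right (a := 0) (b := π)
      (fun u => Real.log (1 + (r^2)^2 - 2*r^2*Real.cos u)) π
    rw [zero_add, ← two_mul] at this
    rw [← this, ← Kneg]
    apply integral_congr; intro θ _
    show Real.log _ = Real.log _
    rw [Real.cos_add_pi]
    congr 1; ring
  rw [key, h2, h3, h4]; ring

lemma Kbound {r : ℝ} (hr0 : 0 ≤ r) (hr1 : r < 1) : |Kint r| ≤ π * (2 * |Real.log (1-r)|) := by
  have hr0' : -1 < r := by linarith
  have hbd : ∀ θ ∈ Set.uIoc (0:ℝ) π, ‖Real.log (1 + r^2 - 2*r*Real.cos θ)‖ ≤ 2 * |Real.log (1-r)| := by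
    intro θ _
    have hw := w_pos hr0' hr1 θ
    have hub : 1 + r^2 - 2*r*Real.cos θ ≤ (1+r)^2 := by
      nlinarith [Real.neg_one_le_cos θ]
    have hlb : (1-r)^2 ≤ 1 + r^2 - 2*r*Real.cos θ := by
      nlinarith [Real.cos_le_one θ]
    rw [Real.norm_eq_abs, abs_le]
    have hlog1 : Real.log (1 + r^2 - 2*r*Real.cos θ) ≤ Real.log ((1+r)^2) :=
      Real.log_le_log hw hub
    have hlog2 : Real.log ((1-r)^2) ≤ Real.log (1 + r^2 - 2*r*Real.cos θ) :=
      Real.log_le_log (pow_pos (by linarith) 2) hlb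
    have e1 : Real.log ((1+r)^2) = 2 * Real.log (1+r) := by
      rw [Real.log_pow]; push_cast; ring
    have e2 : Real.log ((1-r)^2) = 2 * Real.log (1-r) := by
      rw [Real.log_pow]; push_cast; ring
    have h1r : Real.log (1-r) ≤ 0 := Real.log_nonpos (by linarith) (by linarith)
    have habs : |Real.log (1-r)| = -Real.log (1-r) := abs_of_nonpos h1r
    have hsum : Real.log (1+r) + Real.log (1-r) ≤ 0 := by
      rw [← Real.log_mul (by linarith) (by linarith)]
      apply Real.log_nonpos <;> nlinarith
    constructor
    · rw [habs] at *; rw [e2] at hlog2; linarith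
    · rw [habs] at *; rw [e1] at hlog1; linarith
  have hn := intervalIntegral.norm_integral_le_of_norm_le_const hbd
  rw [Real.norm_eq_abs] at hn
  rw [Kint]
  calc |∫ θ in (0:ℝ)..π, Real.log (1 + r^2 - 2*r*Real.cos θ)|
      ≤ 2 * |Real.log (1-r)| * |π - 0| := hn
    _ = π * (2 * |Real.log (1-r)|) := by
        rw [sub_zero, abs_of_nonneg Real.pi_pos.le]; ring

lemma Kiter {r : ℝ} (hr0 : 0 ≤ r) (hr1 : r < 1) (n : ℕ) :
    Kint r = Kint (r^(2^n)) / 2^n := by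
  induction n with
  | zero => simp
  | succ n ih =>
    have h0 : 0 ≤ r^(2^n) := by positivity
    have h1 : r^(2^n) < 1 := pow_lt_one₀ hr0 hr1 (Nat.pos_of_neZero _).ne'
    have hd := Kdouble h0 h1
    rw [← pow_mul, ← pow_succ] at hd
    rw [ih, hd]
    rw [pow_succ]
    field_simp

lemma Kzero {r : ℝ} (hr0 : 0 ≤ r) (hr1 : r < 1) : Kint r = 0 := by
  set C := π * (2 * |Real.log (1-r)|) with hC
  have key : ∀ n : ℕ, |Kint r| ≤ C / 2^n := by
    intro n
    have h0 : 0 ≤ r^(2^n) := by positivity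
    have h1 : r^(2^n) < 1 := pow_lt_one₀ hr0 hr1 (Nat.pos_of_neZero _).ne'
    have hle : r^(2^n) ≤ r := pow_le_of_le_one hr0 hr1.le (Nat.pos_of_neZero _).ne'
    have hb := Kbound h0 h1
    have hlog : |Real.log (1 - r^(2^n))| ≤ |Real.log (1-r)| := by
      rw [abs_of_nonpos (Real.log_nonpos (by nlinarith) (by nlinarith)),
          abs_of_nonpos (Real.log_nonpos (by linarith) (by linarith))]
      have := Real.log_le_log (by linarith : (0:ℝ) < 1 - r) (by linarith : 1 - r ≤ 1 - r^(2^n))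
      linarith
    have h2 : |Kint (r^(2^n))| ≤ C := by
      refine hb.trans ?_
      rw [hC]; gcongr
    rw [Kiter hr0 hr1 n, abs_div, abs_of_nonneg (by positivity : (0:ℝ) ≤ (2:ℝ)^n)]
    gcongr
  have htend : Tendsto (fun n : ℕ => C / 2^n) atTop (𝓝 0) := by
    have h := tendsto_pow_atTop_nhds_zero_of_lt_one (by norm_num : (0:ℝ) ≤ 1/2) (by norm_num : (1:ℝ)/2 < 1)
    have := h.const_mul C
    simp only [mul_zero] at this
    convert this using 2 with n
    rw [div_pow, one_pow, div_eq_mul_inv, div_eq_mul_inv, one_mul]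
  have hfin : |Kint r| ≤ 0 := ge_of_tendsto' htend key
  exact abs_nonpos_iff.mp hfin

section Subst
variable {r : ℝ}

/-- the substitution map -/
noncomputable def phi (r θ : ℝ) : ℝ := 1 + r^2 - 2*r*Real.cos θ

lemma phi_hasDerivAt (r θ : ℝ) : HasDerivAt (phi r) (2*r*Real.sin θ) θ := by
  have h : HasDerivAt (fun θ : ℝ => 1 + r^2 - 2*r*Real.cos θ)
      (0 - 2*r*(-Real.sin θ)) θ :=
    (hasDerivAt_const θ (1 + r^2)).sub ((Real.hasDerivAt_cos θ).const_mul (2*r))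
  exact h.congr_deriv (by ring)

lemma phi_strictMonoOn (hr0 : 0 < r) : StrictMonoOn (phi r) (Set.Icc 0 π) := by
  intro x hx y hy hxy
  have := Real.strictAntiOn_cos hx hy hxy
  simp only [phi]
  nlinarith

lemma phi_image (hr0 : 0 < r) :
    phi r '' (Set.Ioo 0 π) = Set.Ioo ((1-r)^2) ((1+r)^2) := by
  have hcont : ContinuousOn (phi r) (Set.Icc 0 π) := by
    apply Continuous.continuousOn; unfold phi; continuity
  have h0 : phi r 0 = (1-r)^2 := by simp [phi]; ring
  have hpi : phi r π = (1+r)^2 := by simp [phi]; ring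
  apply Set.Subset.antisymm
  · rintro x ⟨θ, hθ, rfl⟩
    constructor
    · rw [← h0]
      exact phi_strictMonoOn hr0 (Set.left_mem_Icc.2 Real.pi_pos.le)
        (Set.mem_Icc_of_Ioo hθ) hθ.1
    · rw [← hpi]
      exact phi_strictMonoOn hr0 (Set.mem_Icc_of_Ioo hθ) (Set.right_mem_Icc.2 Real.pi_pos.le) hθ.2
  · have := intermediate_value_Ioo Real.pi_pos.le hcont
    rw [h0, hpi] at this
    exact this

lemma phi_deriv_abs (hr0 : 0 < r) {θ : ℝ} (hθ : θ ∈ Set.Ioo 0 π) :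
    |2*r*Real.sin θ| = 2*r*Real.sin θ := by
  have h := Real.sin_pos_of_pos_of_lt_pi hθ.1 hθ.2
  apply abs_of_nonneg; positivity

/-- master change of variables -/
lemma subst_integral (hr0 : 0 < r) (g : ℝ → ℝ) :
    ∫ x in Set.Ioo ((1-r)^2) ((1+r)^2), g x
      = ∫ θ in Set.Ioo (0:ℝ) π, (2*r*Real.sin θ) * g (phi r θ) := by
  rw [← phi_image hr0,
    integral_image_eq_integral_abs_deriv_smul measurableSet_Ioo
      (fun θ _ => (phi_hasDerivAt r θ).hasDerivWithinAt)
      (((phi_strictMonoOn hr0).injOn).mono Set.Ioo_subset_Icc_self) g]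
  apply setIntegral_congr_fun measurableSet_Ioo
  intro θ hθ
  show |2*r*Real.sin θ| • g (phi r θ) = _
  rw [phi_deriv_abs hr0 hθ, smul_eq_mul]

lemma subst_integrableOn_iff (hr0 : 0 < r) (g : ℝ → ℝ) :
    IntegrableOn g (Set.Ioo ((1-r)^2) ((1+r)^2))
      ↔ IntegrableOn (fun θ => (2*r*Real.sin θ) * g (phi r θ)) (Set.Ioo (0:ℝ) π) := by
  rw [← phi_image hr0,
    integrableOn_image_iff_integrableOn_abs_deriv_smul measurableSet_Ioo
      (fun θ _ => (phi_hasDerivAt r θ).hasDerivWithinAt)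
      (((phi_strictMonoOn hr0).injOn).mono Set.Ioo_subset_Icc_self) g]
  apply integrableOn_congr_fun _ measurableSet_Ioo
  intro θ hθ
  show |2*r*Real.sin θ| • g (phi r θ) = _
  rw [phi_deriv_abs hr0 hθ, smul_eq_mul]

end Subst

noncomputable def Rf (r x : ℝ) : ℝ := Real.sqrt ((x - (1-r)^2) * ((1+r)^2 - x))

lemma Rf_phi {r : ℝ} (hr0 : 0 < r) {θ : ℝ} (hθ : θ ∈ Set.Icc 0 π) :
    Rf r (phi r θ) = 2*r*Real.sin θ := by
  have hs : 0 ≤ Real.sin θ := Real.sin_nonneg_of_nonneg_of_le_pi hθ.1 hθ.2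
  have h1 : (phi r θ - (1-r)^2) * ((1+r)^2 - phi r θ) = (2*r*Real.sin θ)^2 := by
    have := Real.sin_sq_add_cos_sq θ
    simp only [phi]; nlinarith [this]
  rw [Rf, h1, Real.sqrt_sq (by positivity)]

lemma phi_pos {r : ℝ} (hr0 : 0 < r) (hr1 : r < 1) (θ : ℝ) : 0 < phi r θ :=
  w_pos (by linarith) hr1 θ

lemma Rf_pos {r : ℝ} {x : ℝ} (hx : x ∈ Set.Ioo ((1-r)^2) ((1+r)^2)) : 0 < Rf r x := by
  apply Real.sqrt_pos.2
  have := hx.1; have := hx.2; nlinarith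

lemma x_pos {r : ℝ} (hr1 : r < 1) {x : ℝ} (hx : x ∈ Set.Ioo ((1-r)^2) ((1+r)^2)) : 0 < x := by
  have h0 : (0:ℝ) < 1 - r := by linarith
  have h1 : (0:ℝ) < (1-r)^2 := by positivity
  exact h1.trans hx.1

-- integrability lemmas
lemma intOn_one_div_Rf {r : ℝ} (hr0 : 0 < r) (hr1 : r < 1) :
    IntegrableOn (fun x => 1 / Rf r x) (Set.Ioo ((1-r)^2) ((1+r)^2)) := by
  rw [subst_integrableOn_iff hr0]
  rw [integrableOn_congr_fun (g := fun _ => (1:ℝ)) ?_ measurableSet_Ioo]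
  · exact integrableOn_const measure_Ioo_lt_top.ne
  · intro θ hθ
    have hs : 0 < Real.sin θ := Real.sin_pos_of_pos_of_lt_pi hθ.1 hθ.2
    beta_reduce
    rw [Rf_phi hr0 (Set.mem_Icc_of_Ioo hθ)]
    field_simp

lemma intOn_log_div_Rf {r : ℝ} (hr0 : 0 < r) (hr1 : r < 1) :
    IntegrableOn (fun x => Real.log x / Rf r x) (Set.Ioo ((1-r)^2) ((1+r)^2)) := by
  rw [subst_integrableOn_iff hr0]
  rw [integrableOn_congr_fun (g := fun θ => Real.log (phi r θ)) ?_ measurableSet_Ioo]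
  · exact ((logw_cont (by linarith) hr1).integrableOn_Icc).mono_set Set.Ioo_subset_Icc_self
  · intro θ hθ
    have hs : 0 < Real.sin θ := Real.sin_pos_of_pos_of_lt_pi hθ.1 hθ.2
    beta_reduce
    rw [Rf_phi hr0 (Set.mem_Icc_of_Ioo hθ)]
    field_simp

lemma intOn_log_div_xRf {r : ℝ} (hr0 : 0 < r) (hr1 : r < 1) :
    IntegrableOn (fun x => Real.log x / (x * Rf r x)) (Set.Ioo ((1-r)^2) ((1+r)^2)) := by
  rw [subst_integrableOn_iff hr0]
  rw [integrableOn_congr_fun (g := fun θ => Real.log (phi r θ) / phi r θ) ?_ measurableSet_Ioo]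
  · apply IntegrableOn.mono_set ?_ (Set.Ioo_subset_Icc_self (a := (0:ℝ)) (b := π))
    apply ContinuousOn.integrableOn_compact isCompact_Icc
    apply Continuous.continuousOn
    exact (logw_cont (by linarith) hr1).div (by unfold phi; continuity)
      (fun θ => (phi_pos hr0 hr1 θ).ne')
  · intro θ hθ
    have hs : 0 < Real.sin θ := Real.sin_pos_of_pos_of_lt_pi hθ.1 hθ.2
    have hp := phi_pos hr0 hr1 θ
    beta_reduce
    rw [Rf_phi hr0 (Set.mem_Icc_of_Ioo hθ)]
    field_simp

-- J integrals
lemma J0 {r : ℝ} (hr0 : 0 < r) (hr1 : r < 1) :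
    ∫ x in Set.Ioo ((1-r)^2) ((1+r)^2), 1 / Rf r x = π := by
  rw [subst_integral hr0]
  rw [setIntegral_congr_fun measurableSet_Ioo (g := fun _ => (1:ℝ)) ?_]
  · simp [Real.volume_Ioo, Real.pi_pos.le]
  · intro θ hθ
    have hs : 0 < Real.sin θ := Real.sin_pos_of_pos_of_lt_pi hθ.1 hθ.2
    beta_reduce
    rw [Rf_phi hr0 (Set.mem_Icc_of_Ioo hθ)]
    field_simp

lemma J1 {r : ℝ} (hr0 : 0 < r) (hr1 : r < 1) :
    ∫ x in Set.Ioo ((1-r)^2) ((1+r)^2), Real.log x / Rf r x = 0 := by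
  rw [subst_integral hr0]
  rw [setIntegral_congr_fun measurableSet_Ioo (g := fun θ => Real.log (phi r θ)) ?_]
  · have h1 : Kint r = ∫ θ in Set.Ioo (0:ℝ) π, Real.log (phi r θ) := by
      rw [Kint, intervalIntegral.integral_of_le Real.pi_pos.le,
        MeasureTheory.integral_Ioc_eq_integral_Ioo]
      rfl
    rw [← h1, Kzero hr0.le hr1]
  · intro θ hθ
    have hs : 0 < Real.sin θ := Real.sin_pos_of_pos_of_lt_pi hθ.1 hθ.2
    beta_reduce
    rw [Rf_phi hr0 (Set.mem_Icc_of_Ioo hθ)]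
    field_simp

lemma Rf_inv {r : ℝ} (hr0 : 0 < r) (hr1 : r < 1) {x : ℝ}
    (hx : x ∈ Set.Ioo ((1-r)^2) ((1+r)^2)) :
    Rf r ((1-r^2)^2/x) = (1-r^2) * Rf r x / x := by
  have hr2 : (0:ℝ) < 1 - r^2 := by nlinarith
  have hxpos := x_pos hr1 hx
  have h1 : ((1-r^2)^2/x - (1-r)^2) * ((1+r)^2 - (1-r^2)^2/x)
      = ((1-r^2)/x)^2 * ((x - (1-r)^2) * ((1+r)^2 - x)) := by
    field_simp; ring
  rw [Rf, h1, Real.sqrt_mul (sq_nonneg _), Real.sqrt_sq (by positivity : (0:ℝ) ≤ (1-r^2)/x)]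
  rw [Rf]; ring

lemma psi_image {r : ℝ} (hr0 : 0 < r) (hr1 : r < 1) :
    (fun x => (1-r^2)^2/x) '' (Set.Ioo ((1-r)^2) ((1+r)^2)) = Set.Ioo ((1-r)^2) ((1+r)^2) := by
  have hc : (1-r^2)^2 = (1-r)^2 * (1+r)^2 := by ring
  have hr2 : (0:ℝ) < 1 - r^2 := by nlinarith
  have ha : (0:ℝ) < (1-r)^2 := pow_pos (by linarith) 2
  have hb : (0:ℝ) < (1+r)^2 := by positivity
  have hmem : ∀ t ∈ Set.Ioo ((1-r)^2) ((1+r)^2),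
      (1-r^2)^2/t ∈ Set.Ioo ((1-r)^2) ((1+r)^2) := by
    intro t ht
    have htpos : 0 < t := ha.trans ht.1
    constructor
    · rw [lt_div_iff₀ htpos, hc]
      nlinarith [ht.2]
    · rw [div_lt_iff₀ htpos, hc]
      nlinarith [ht.1]
  apply Set.Subset.antisymm
  · rintro x ⟨t, ht, rfl⟩
    exact hmem t ht
  · intro x hx
    have hxpos : 0 < x := ha.trans hx.1
    refine ⟨(1-r^2)^2/x, hmem x hx, ?_⟩
    field_simp [hr2.ne']

lemma J2 {r : ℝ} (hr0 : 0 < r) (hr1 : r < 1) :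
    ∫ x in Set.Ioo ((1-r)^2) ((1+r)^2), Real.log x / (x * Rf r x)
      = 2 * Real.log (1-r^2) * π / (1-r^2) := by
  have ha : (0:ℝ) < (1-r)^2 := pow_pos (by linarith) 2
  have hr2 : (0:ℝ) < 1 - r^2 := by nlinarith
  have hderiv : ∀ x ∈ Set.Ioo ((1-r)^2) ((1+r)^2),
      HasDerivWithinAt (fun x => (1-r^2)^2/x) (-( (1-r^2)^2/x^2)) (Set.Ioo ((1-r)^2) ((1+r)^2)) x := by
    intro x hx
    have hxpos := x_pos hr1 hx
    have h2 : HasDerivAt (fun x : ℝ => (1-r^2)^2/x) (-((1-r^2)^2/x^2)) x := by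
      have h := ((hasDerivAt_inv hxpos.ne').const_mul ((1-r^2)^2))
      simp only [div_eq_mul_inv]
      refine h.congr_deriv ?_
      ring
    exact h2.hasDerivWithinAt
  have hinj : Set.InjOn (fun x => (1-r^2)^2/x) (Set.Ioo ((1-r)^2) ((1+r)^2)) := by
    intro x hx y hy h
    have hxpos := x_pos hr1 hx
    have hypos := x_pos hr1 hy
    simp only at h
    field_simp at h
    nlinarith [h]
  have key := integral_image_eq_integral_abs_deriv_smul measurableSet_Ioo hderiv hinj
    (fun x => Real.log x / (x * Rf r x))
  rw [psi_image hr0 hr1] at key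
  rw [key]
  have hcongr : ∀ x ∈ Set.Ioo ((1-r)^2) ((1+r)^2),
      |(-( (1-r^2)^2/x^2))| • ((fun x => Real.log x / (x * Rf r x)) ((1-r^2)^2/x))
      = (Real.log ((1-r^2)^2) / (1-r^2)) * (1 / Rf r x)
        - (1/(1-r^2)) * (Real.log x / Rf r x) := by
    intro x hx
    have hxpos := x_pos hr1 hx
    have hRpos := Rf_pos hx
    rw [abs_neg, abs_of_nonneg (by positivity : (0:ℝ) ≤ (1-r^2)^2/x^2), smul_eq_mul]
    beta_reduce
    rw [Rf_inv hr0 hr1 hx,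
      Real.log_div (by positivity) hxpos.ne']
    field_simp
  rw [setIntegral_congr_fun measurableSet_Ioo hcongr]
  rw [MeasureTheory.integral_sub
    ((intOn_one_div_Rf hr0 hr1).const_mul _)
    ((intOn_log_div_Rf hr0 hr1).const_mul _),
    MeasureTheory.integral_const_mul, MeasureTheory.integral_const_mul,
    J0 hr0 hr1, J1 hr0 hr1]
  rw [show Real.log ((1-r^2)^2) = 2 * Real.log (1-r^2) by
    rw [Real.log_pow]; norm_num]
  field_simp
  ring

lemma Rf_hasDerivAt {r x : ℝ} (hx : x ∈ Set.Ioo ((1-r)^2) ((1+r)^2)) :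
    HasDerivAt (Rf r) (((1+r^2) - x)/(Rf r x)) x := by
  have hg : HasDerivAt (fun x => (x - (1-r)^2) * ((1+r)^2 - x)) (2*(1+r^2) - 2*x) x := by
    have h1 : HasDerivAt (fun x : ℝ => x - (1-r)^2) 1 x := (hasDerivAt_id x).sub_const _
    have h2 : HasDerivAt (fun x : ℝ => (1+r)^2 - x) (-1) x := (hasDerivAt_id x).const_sub _
    have := h1.mul h2
    refine this.congr_deriv ?_
    ring
  have hne : (x - (1-r)^2) * ((1+r)^2 - x) ≠ 0 := by
    have := hx.1; have := hx.2; nlinarith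
  have h := hg.sqrt hne
  have hRpos := Rf_pos hx
  refine h.congr_deriv ?_
  rw [Rf] at hRpos ⊢
  field_simp

lemma arcsinA_hasDerivAt {r x : ℝ} (hr0 : 0 < r) (hx : x ∈ Set.Ioo ((1-r)^2) ((1+r)^2)) :
    HasDerivAt (fun x => Real.arcsin ((x - 1 - r^2)/(2*r))) (1/(Rf r x)) x := by
  have hRpos := Rf_pos hx
  have hsq : ((x - 1 - r^2)/(2*r))^2 < 1 := by
    rw [div_pow, div_lt_one (by positivity)]
    have := hx.1; have := hx.2; nlinarith
  have h1 : (x - 1 - r^2)/(2*r) ≠ -1 := by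
    intro h; rw [h] at hsq; norm_num at hsq
  have h2 : (x - 1 - r^2)/(2*r) ≠ 1 := by
    intro h; rw [h] at hsq; norm_num at hsq
  have hu : HasDerivAt (fun x : ℝ => (x - 1 - r^2)/(2*r)) (1/(2*r)) x := by
    have : HasDerivAt (fun x : ℝ => x - 1 - r^2) 1 x :=
      ((hasDerivAt_id x).sub_const _).sub_const _
    convert this.div_const (2*r) using 1
  have := (Real.hasDerivAt_arcsin h1 h2).comp x hu
  refine this.congr_deriv ?_
  have hval : 1 - ((x - 1 - r^2)/(2*r))^2 = (Rf r x/(2*r))^2 := by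
    have hR2 : (Rf r x)^2 = (x - (1-r)^2) * ((1+r)^2 - x) := by
      rw [Rf]; apply Real.sq_sqrt; have := hx.1; have := hx.2; nlinarith
    field_simp
    linear_combination (-1 : ℝ) * hR2
  rw [hval, Real.sqrt_sq (by positivity)]
  field_simp

lemma arcsinB_hasDerivAt {r x : ℝ} (hr0 : 0 < r) (hr1 : r < 1)
    (hx : x ∈ Set.Ioo ((1-r)^2) ((1+r)^2)) :
    HasDerivAt (fun x => Real.arcsin (((1+r^2)*x - (1-r^2)^2)/(2*r*x)))
      ((1-r^2)/(x * Rf r x)) x := by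
  have hRpos := Rf_pos hx
  have hxpos := x_pos hr1 hx
  have hr2 : (0:ℝ) < 1 - r^2 := by nlinarith
  have hR2 : (Rf r x)^2 = (x - (1-r)^2) * ((1+r)^2 - x) := by
    rw [Rf]; apply Real.sq_sqrt; have := hx.1; have := hx.2; nlinarith
  have hsq : (((1+r^2)*x - (1-r^2)^2)/(2*r*x))^2 < 1 := by
    rw [div_pow, div_lt_one (by positivity)]
    have h := hx.1; have h2 := hx.2
    nlinarith [sq_nonneg ((1-r^2)), hR2, Rf_pos hx, sq_nonneg (Rf r x), mul_pos (mul_pos hr2 hr2) (mul_pos (sub_pos.2 hx.1) (sub_pos.2 hx.2))]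
  have h1 : ((1+r^2)*x - (1-r^2)^2)/(2*r*x) ≠ -1 := by
    intro h; rw [h] at hsq; norm_num at hsq
  have h2 : ((1+r^2)*x - (1-r^2)^2)/(2*r*x) ≠ 1 := by
    intro h; rw [h] at hsq; norm_num at hsq
  have hu : HasDerivAt (fun x : ℝ => ((1+r^2)*x - (1-r^2)^2)/(2*r*x))
      ((1-r^2)^2/(2*r*x^2)) x := by
    have hbase : HasDerivAt (fun x : ℝ => (1+r^2)/(2*r) - (1-r^2)^2/(2*r) * x⁻¹)
        ((1-r^2)^2/(2*r*x^2)) x := by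
      have h := ((hasDerivAt_inv hxpos.ne').const_mul ((1-r^2)^2/(2*r))).const_sub ((1+r^2)/(2*r))
      refine h.congr_deriv ?_
      field_simp
    apply hbase.congr_of_eventuallyEq
    filter_upwards [eventually_ne_nhds hxpos.ne'] with z hz
    field_simp
  have := (Real.hasDerivAt_arcsin h1 h2).comp x hu
  refine this.congr_deriv ?_
  have hval : 1 - (((1+r^2)*x - (1-r^2)^2)/(2*r*x))^2 = ((1-r^2) * Rf r x/(2*r*x))^2 := by
    field_simp
    linear_combination (-(1-r^2)^2) * hR2
  rw [hval, Real.sqrt_sq (by positivity)]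
  field_simp

noncomputable def Hfun (r x : ℝ) : ℝ :=
  (Real.log x - 1) * Rf r x - (1+r^2) * Real.arcsin ((x - 1 - r^2)/(2*r))
    + (1-r^2) * Real.arcsin (((1+r^2)*x - (1-r^2)^2)/(2*r*x))

lemma Hfun_hasDerivAt {r x : ℝ} (hr0 : 0 < r) (hr1 : r < 1)
    (hx : x ∈ Set.Ioo ((1-r)^2) ((1+r)^2)) :
    HasDerivAt (Hfun r)
      (Real.log x * Rf r x / x - (1+r^2) * (Real.log x / Rf r x)
        + (1-r^2)^2 * (Real.log x / (x * Rf r x))) x := by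
  have hRpos := Rf_pos hx
  have hxpos := x_pos hr1 hx
  have hR2 : (Rf r x)^2 = (x - (1-r)^2) * ((1+r)^2 - x) := by
    rw [Rf]; apply Real.sq_sqrt; have := hx.1; have := hx.2; nlinarith
  have h1 : HasDerivAt (fun x => (Real.log x - 1) * Rf r x)
      (x⁻¹ * Rf r x + (Real.log x - 1) * (((1+r^2) - x)/(Rf r x))) x :=
    ((Real.hasDerivAt_log hxpos.ne').sub_const 1).mul (Rf_hasDerivAt hx)
  have h2 := (arcsinA_hasDerivAt hr0 hx).const_mul (1+r^2)
  have h3 := (arcsinB_hasDerivAt hr0 hr1 hx).const_mul (1-r^2)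
  have h := (h1.sub h2).add h3
  refine h.congr_deriv ?_
  have hr2 : (0:ℝ) < 1 - r^2 := by nlinarith
  set R := Rf r x with hR
  set L := Real.log x with hL
  have hxR : x * R ≠ 0 := by positivity
  apply mul_right_cancel₀ hxR
  have hTx : (L * R / x - (1+r^2) * (L / R) + (1-r^2)^2 * (L / (x * R))) * (x * R)
      = L * R^2 - (1+r^2)*x*L + (1-r^2)^2*L := by
    field_simp
  have hDx : (x⁻¹ * R + (L - 1) * (((1+r^2) - x)/R) - (1+r^2) * (1/R) + (1-r^2) * ((1-r^2)/(x*R))) * (x * R)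
      = R^2 + (L-1)*x*((1+r^2) - x) - (1+r^2)*x + (1-r^2)^2 := by
    field_simp
  rw [hTx, hDx, hR2]
  ring

lemma Hfun_continuousAt {r x : ℝ} (hr0 : 0 < r) (hx : 0 < x) : ContinuousAt (Hfun r) x := by
  unfold Hfun Rf
  apply ContinuousAt.add
  · apply ContinuousAt.sub
    · exact ((Real.continuousAt_log hx.ne').sub continuousAt_const).mul
        (Continuous.continuousAt (by continuity))
    · apply continuousAt_const.mul
      exact (Real.continuous_arcsin.continuousAt).comp (by fun_prop)
  · apply continuousAt_const.mul
    apply (Real.continuous_arcsin.continuousAt).comp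
    exact ContinuousAt.div (by fun_prop) (by fun_prop) (by positivity)

lemma Hfun_at_a {r : ℝ} (hr0 : 0 < r) (hr1 : r < 1) : Hfun r ((1-r)^2) = π * r^2 := by
  have h1r : (0:ℝ) < 1 - r := by linarith
  have hRa : Rf r ((1-r)^2) = 0 := by
    rw [Rf]; simp
  have hA : ((1-r)^2 - 1 - r^2)/(2*r) = -1 := by
    field_simp; ring
  have hB : ((1+r^2)*(1-r)^2 - (1-r^2)^2)/(2*r*(1-r)^2) = -1 := by
    rw [div_eq_iff (by positivity)]; ring
  rw [Hfun, hRa, hA, hB, Real.arcsin_neg_one]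
  ring

lemma Hfun_at_b {r : ℝ} (hr0 : 0 < r) (hr1 : r < 1) : Hfun r ((1+r)^2) = -(π * r^2) := by
  have hRb : Rf r ((1+r)^2) = 0 := by
    rw [Rf]; simp
  have hA : ((1+r)^2 - 1 - r^2)/(2*r) = 1 := by
    field_simp; ring
  have hB : ((1+r^2)*(1+r)^2 - (1-r^2)^2)/(2*r*(1+r)^2) = 1 := by
    rw [div_eq_iff (by positivity)]; ring
  rw [Hfun, hRb, hA, hB, Real.arcsin_one]
  ring

lemma ftc_main {r : ℝ} (hr0 : 0 < r) (hr1 : r < 1) :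
    ∫ x in ((1-r)^2)..((1+r)^2),
      (Real.log x * Rf r x / x - (1+r^2) * (Real.log x / Rf r x)
        + (1-r^2)^2 * (Real.log x / (x * Rf r x)))
      = -(π*r^2) - π*r^2 := by
  have h1r : (0:ℝ) < 1 - r := by linarith
  have ha : (0:ℝ) < (1-r)^2 := by positivity
  have hab : ((1-r)^2 : ℝ) < (1+r)^2 := by nlinarith
  have hint : IntervalIntegrable
      (fun x => Real.log x * Rf r x / x - (1+r^2) * (Real.log x / Rf r x)
        + (1-r^2)^2 * (Real.log x / (x * Rf r x))) volume ((1-r)^2) ((1+r)^2) := by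
    apply IntervalIntegrable.add
    apply IntervalIntegrable.sub
    · apply ContinuousOn.intervalIntegrable
      apply ContinuousOn.div
      · apply ContinuousOn.mul
        · apply Real.continuousOn_log.mono
          intro x hx
          rw [Set.uIcc_of_le hab.le] at hx
          exact (ha.trans_le hx.1).ne'
        · exact Continuous.continuousOn (by unfold Rf; continuity)
      · exact continuousOn_id
      · intro x hx
        rw [Set.uIcc_of_le hab.le] at hx
        exact (ha.trans_le hx.1).ne'
    · apply IntervalIntegrable.const_mul
      rw [intervalIntegrable_iff_integrableOn_Ioo_of_le hab.le]
      exact intOn_log_div_Rf hr0 hr1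
    · apply IntervalIntegrable.const_mul
      rw [intervalIntegrable_iff_integrableOn_Ioo_of_le hab.le]
      exact intOn_log_div_xRf hr0 hr1
  have := intervalIntegral.integral_eq_sub_of_hasDerivAt_of_tendsto hab
    (fun x hx => Hfun_hasDerivAt hr0 hr1 hx) hint
    (((Hfun_continuousAt hr0 ha).continuousWithinAt).tendsto)
    (((Hfun_continuousAt hr0 (ha.trans hab)).continuousWithinAt).tendsto)
  rw [this, Hfun_at_a hr0 hr1, Hfun_at_b hr0 hr1]

lemma main_integral {r : ℝ} (hr0 : 0 < r) (hr1 : r < 1) :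
    ∫ x in ((1-r)^2)..((1+r)^2), Real.log x * Rf r x / x
      = -(2*π*r^2) - 2*π*(1-r^2)*Real.log (1-r^2) := by
  have h1r : (0:ℝ) < 1 - r := by linarith
  have ha : (0:ℝ) < (1-r)^2 := by positivity
  have hab : ((1-r)^2 : ℝ) < (1+r)^2 := by nlinarith
  have hr2 : (0:ℝ) < 1 - r^2 := by nlinarith
  have hint1 : IntervalIntegrable (fun x => Real.log x * Rf r x / x) volume ((1-r)^2) ((1+r)^2) := by
    apply ContinuousOn.intervalIntegrable
    apply ContinuousOn.div
    · apply ContinuousOn.mul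
      · apply Real.continuousOn_log.mono
        intro x hx
        rw [Set.uIcc_of_le hab.le] at hx
        exact (ha.trans_le hx.1).ne'
      · exact Continuous.continuousOn (by unfold Rf; continuity)
    · exact continuousOn_id
    · intro x hx
      rw [Set.uIcc_of_le hab.le] at hx
      exact (ha.trans_le hx.1).ne'
  have hint2 : IntervalIntegrable (fun x => Real.log x / Rf r x) volume ((1-r)^2) ((1+r)^2) := by
    rw [intervalIntegrable_iff_integrableOn_Ioo_of_le hab.le]
    exact intOn_log_div_Rf hr0 hr1
  have hint3 : IntervalIntegrable (fun x => Real.log x / (x * Rf r x)) volume ((1-r)^2) ((1+r)^2) := by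
    rw [intervalIntegrable_iff_integrableOn_Ioo_of_le hab.le]
    exact intOn_log_div_xRf hr0 hr1
  have hsplit := ftc_main hr0 hr1
  rw [intervalIntegral.integral_add ((hint1.sub (hint2.const_mul _))) (hint3.const_mul _),
    intervalIntegral.integral_sub hint1 (hint2.const_mul _),
    intervalIntegral.integral_const_mul, intervalIntegral.integral_const_mul] at hsplit
  have e1 : (∫ x in ((1-r)^2)..((1+r)^2), Real.log x / Rf r x) = 0 := by
    rw [intervalIntegral.integral_of_le hab.le, MeasureTheory.integral_Ioc_eq_integral_Ioo]
    exact J1 hr0 hr1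
  have e2 : (∫ x in ((1-r)^2)..((1+r)^2), Real.log x / (x * Rf r x))
      = 2 * Real.log (1-r^2) * π / (1-r^2) := by
    rw [intervalIntegral.integral_of_le hab.le, MeasureTheory.integral_Ioc_eq_integral_Ioo]
    exact J2 hr0 hr1
  rw [e1, e2] at hsplit
  have : (1-r^2)^2 * (2 * Real.log (1-r^2) * π / (1-r^2)) = 2*π*(1-r^2)*Real.log (1-r^2) := by
    field_simp
  linarith [hsplit, this]

/-- For `y ∈ (0,1)`, the integral of `log x` against the Marčenko–Pastur density
with parameter `y` equals `((y−1)/y)·log(1−y) − 1`. -/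
theorem marchenko_pastur_log_moment (y : ℝ) (hy : 0 < y) (hy1 : y < 1) :
    ∫ x in ((1 - Real.sqrt y) ^ 2)..((1 + Real.sqrt y) ^ 2),
      Real.log x * (Real.sqrt ((x - (1 - Real.sqrt y) ^ 2) * ((1 + Real.sqrt y) ^ 2 - x)) /
        (2 * Real.pi * x * y)) = (y - 1) / y * Real.log (1 - y) - 1 := by
  set r := Real.sqrt y with hr
  have hr0 : 0 < r := Real.sqrt_pos.2 hy
  have hr1 : r < 1 := by
    rw [hr, show (1:ℝ) = Real.sqrt 1 by simp]
    exact Real.sqrt_lt_sqrt hy.le hy1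
  have hry : r^2 = y := Real.sq_sqrt hy.le
  have h1r : (0:ℝ) < 1 - r := by linarith
  have ha : (0:ℝ) < (1-r)^2 := by positivity
  have hab : ((1-r)^2 : ℝ) < (1+r)^2 := by nlinarith
  have hcongr : ∀ x ∈ Set.uIcc ((1-r)^2) ((1+r)^2),
      Real.log x * (Real.sqrt ((x - (1-r)^2) * ((1+r)^2 - x)) / (2*π*x*y))
      = (2*π*y)⁻¹ * (Real.log x * Rf r x / x) := by
    intro x hx
    rw [Set.uIcc_of_le hab.le] at hx
    have hxpos : 0 < x := ha.trans_le hx.1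
    rw [Rf]
    ring
  rw [intervalIntegral.integral_congr hcongr, intervalIntegral.integral_const_mul,
    main_integral hr0 hr1, hry]
  have hy2 : (0:ℝ) < 1 - y := by linarith
  field_simp
  ring
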